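/- Let I_1,…,I_w be a partition of [n] (some blocks possibly empty), let 0 < p < 1/2, and A = 2/p^w. Then there exists an index k ∈ {1,…,w} such that |I_k| ≥ max{ A·∑_{j=k+1}^{w} |I_j|, n/(2wA^w) }. -/

import Mathlib

open Finset

theorem partition_dominating_block (n w : ℕ) (hw : 1 ≤ w)
    (I : Fin w → Finset (Fin n))
    (hdisj : ∀ i j : Fin w, i ≠ j → Disjoint (I i) (I j))
    (hcover : (univ : Finset (Fin w)).biUnion I = univ)
    (p A : ℝ) (hp0 : 0 < p) (hp : p < 1 / 2) (hA : A = 2 / p ^ w) :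
    ∃ k : Fin w,
      A * ∑ j ∈ univ.filter (fun j => k < j), ((I j).card : ℝ) ≤ ((I k).card : ℝ) ∧
      (n : ℝ) / (2 * w * A ^ w) ≤ ((I k).card : ℝ) := by
  classical
  have hpw : (0:ℝ) < p ^ w := pow_pos hp0 w
  have hA0 : (0:ℝ) < A := by rw [hA]; positivity
  have hA2 : (2:ℝ) ^ (w+1) ≤ A := by
    have h1 : p ^ w ≤ (1/2:ℝ) ^ w := pow_le_pow_left₀ hp0.le hp.le w
    have h2 : (2:ℝ) / (1/2:ℝ)^w ≤ 2 / p ^ w :=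
      div_le_div_of_nonneg_left (by norm_num) hpw h1
    have h3 : (2:ℝ) / (1/2:ℝ)^w = 2 ^ (w+1) := by
      rw [div_pow, one_pow, pow_succ]
      field_simp
    rw [hA]; rw [h3] at h2; exact h2
  have hA1 : (1:ℝ) ≤ A := by
    calc (1:ℝ) ≤ 2 ^ (w+1) := one_le_pow₀ (by norm_num)
    _ ≤ A := hA2
  set c : ℕ → ℝ := fun i => if h : i < w then ((I ⟨i,h⟩).card : ℝ) else 0 with hc
  set S : ℕ → ℝ := fun m => ∑ j ∈ Finset.Ico m w, c j with hSdef
  have hcnn : ∀ i, 0 ≤ c i := by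
    intro i; simp only [hc]; split <;> positivity
  have hSnn : ∀ m, 0 ≤ S m := fun m => Finset.sum_nonneg fun j _ => hcnn j
  have hSrec : ∀ i, i < w → S i = c i + S (i+1) := by
    intro i hi
    simp only [hSdef]
    exact Finset.sum_eq_sum_Ico_succ_bot hi c
  have hS0 : S 0 = (n:ℝ) := by
    have hcards : ∑ j : Fin w, (I j).card = n := by
      rw [← Finset.card_biUnion (fun i _ j _ hij => hdisj i j hij), hcover, card_univ,
        Fintype.card_fin]
    simp only [hSdef]
    rw [← Finset.range_eq_Ico, ← Fin.sum_univ_eq_sum_range]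
    have : ∀ j : Fin w, c (j:ℕ) = ((I j).card : ℝ) := by
      intro j; simp only [hc]; rw [dif_pos j.isLt]
    rw [Finset.sum_congr rfl (fun j _ => this j)]
    rw [← Nat.cast_sum, hcards]
  have hfilter : ∀ m : ℕ,
      S m = ∑ j ∈ univ.filter (fun j : Fin w => m ≤ (j:ℕ)), ((I j).card : ℝ) := by
    intro m
    simp only [hSdef]
    have h1 : Finset.Ico m w = (Finset.range w).filter (fun j => m ≤ j) := by
      ext x; simp only [Finset.mem_Ico, Finset.mem_filter, Finset.mem_range]; tauto
    rw [h1, Finset.sum_filter, ← Fin.sum_univ_eq_sum_range (fun j => if m ≤ j then c j else 0),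
      Finset.sum_filter]
    refine Finset.sum_congr rfl fun j _ => ?_
    by_cases h : m ≤ (j:ℕ) <;> simp [h, hc, j.isLt]
  -- the set of good indices is nonempty
  have hex : ∃ i, i < w ∧ A * S (i+1) ≤ c i := by
    refine ⟨w-1, by omega, ?_⟩
    have : S (w-1+1) = 0 := by
      have : w - 1 + 1 = w := by omega
      simp [hSdef, this]
    rw [this, mul_zero]; exact hcnn _
  set k := Nat.find hex with hkdef
  obtain ⟨hkw, hkgood⟩ := Nat.find_spec hex
  have hlt : ∀ i, i < k → c i < A * S (i+1) := by
    intro i hik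
    have := Nat.find_min hex hik
    push_neg at this
    exact this (by omega)
  have hgrow : ∀ i, i ≤ k → S 0 ≤ (1+A)^i * S i := by
    intro i hi
    induction i with
    | zero => simp
    | succ i ih =>
      have h1 : S 0 ≤ (1+A)^i * S i := ih (by omega)
      have h2 : S i ≤ (1+A) * S (i+1) := by
        have h3 := hlt i (by omega)
        have h4 := hSrec i (by omega)
        nlinarith [hSnn (i+1)]
      calc S 0 ≤ (1+A)^i * S i := h1
        _ ≤ (1+A)^i * ((1+A) * S (i+1)) := by
            apply mul_le_mul_of_nonneg_left h2 (by positivity)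
        _ = (1+A)^(i+1) * S (i+1) := by ring
  have hn : (n:ℝ) ≤ (1+A)^k * S k := hS0 ▸ hgrow k le_rfl
  have hSk : S k ≤ 2 * c k := by
    have h4 := hSrec k hkw
    have h5 : S (k+1) ≤ c k / A := (le_div_iff₀' hA0).mpr hkgood
    have h6 : c k / A ≤ c k := div_le_self (hcnn k) hA1
    linarith
  have hpow : (1+A)^k ≤ A ^ w := by
    calc (1+A)^k ≤ (1+A)^(w-1) := by
          apply pow_le_pow_right₀ (by linarith) (by omega)
      _ ≤ (2*A)^(w-1) := by
          apply pow_le_pow_left₀ (by linarith) (by linarith)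
      _ = 2^(w-1) * A^(w-1) := mul_pow _ _ _
      _ ≤ A * A^(w-1) := by
          apply mul_le_mul_of_nonneg_right _ (by positivity)
          calc (2:ℝ)^(w-1) ≤ 2^(w+1) := by
                apply pow_le_pow_right₀ (by norm_num) (by omega)
            _ ≤ A := hA2
      _ = A ^ w := by rw [← pow_succ']; congr 1; omega
  have hck : (n:ℝ) / (2 * w * A ^ w) ≤ c k := by
    rw [div_le_iff₀ (by positivity)]
    have h7 : (n:ℝ) ≤ (1+A)^k * (2 * c k) := by
      calc (n:ℝ) ≤ (1+A)^k * S k := hn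
        _ ≤ (1+A)^k * (2 * c k) := by
            apply mul_le_mul_of_nonneg_left hSk (by positivity)
    have h8 : (1+A)^k * (2 * c k) ≤ A^w * (2 * c k) := by
      exact mul_le_mul_of_nonneg_right hpow (mul_nonneg (by norm_num) (hcnn k))
    have h9 : (1:ℝ) ≤ (w:ℝ) := by exact_mod_cast hw
    nlinarith [hcnn k, pow_pos hA0 w]
  refine ⟨⟨k, hkw⟩, ?_, ?_⟩
  · have heq : (univ.filter (fun j : Fin w => (⟨k, hkw⟩ : Fin w) < j))
        = univ.filter (fun j : Fin w => k + 1 ≤ (j:ℕ)) := by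
      apply Finset.filter_congr
      intro j _
      simp only [Fin.lt_def]; omega
    rw [heq, ← hfilter (k+1)]
    have : c k = ((I ⟨k, hkw⟩).card : ℝ) := by simp only [hc]; rw [dif_pos hkw]
    rw [← this]; exact hkgood
  · have : c k = ((I ⟨k, hkw⟩).card : ℝ) := by simp only [hc]; rw [dif_pos hkw]
    rw [← this]; exact hck
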